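/- Bounds on the sharp C_p-constant (Proposition 2.10): For every p ≥ 2, the constant c₁(p) satisfies 1/2^{p−2} ≤ c₁(p) ≤ (p−1)/2^{p−2}. -/

import Mathlib

open Real Set

/-- Midpoint convexity of `rpow`. -/
private lemma mid_rpow {a b r : ℝ} (ha : 0 ≤ a) (hb : 0 ≤ b) (hr : 1 ≤ r) :
    2 * ((a + b) / 2) ^ r ≤ a ^ r + b ^ r := by
  have h := (convexOn_rpow hr).2 (mem_Ici.2 ha) (mem_Ici.2 hb)
    (by norm_num : (0:ℝ) ≤ 1/2) (by norm_num : (0:ℝ) ≤ 1/2) (by norm_num)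
  simp only [smul_eq_mul] at h
  have e : (1/2 : ℝ) * a + (1/2 : ℝ) * b = (a + b) / 2 := by ring
  rw [e] at h
  linarith

/-- Tangent line inequality for `rpow` (convexity). -/
private lemma tangent_rpow {a b q : ℝ} (ha : 0 < a) (hb : 0 ≤ b) (hq : 1 ≤ q) :
    a ^ q + q * a ^ (q - 1) * (b - a) ≤ b ^ q := by
  have hx : (-1 : ℝ) ≤ b / a - 1 := by
    have : 0 ≤ b / a := div_nonneg hb ha.le
    linarith
  have h := one_add_mul_self_le_rpow_one_add hx hq
  have e1 : (1 : ℝ) + (b / a - 1) = b / a := by ring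
  rw [e1] at h
  have hd : (b / a) ^ q = b ^ q / a ^ q := Real.div_rpow hb ha.le q
  rw [hd] at h
  have hap : 0 < a ^ q := Real.rpow_pos_of_pos ha q
  have h2 := mul_le_mul_of_nonneg_left h hap.le
  have e2 : a ^ q * (b ^ q / a ^ q) = b ^ q := by field_simp
  rw [e2] at h2
  have e3 : a ^ q + q * a ^ (q - 1) * (b - a) = a ^ q * (1 + q * (b / a - 1)) := by
    have : a ^ (q - 1) = a ^ q / a := Real.rpow_sub_one ha.ne' q
    rw [this]; field_simp
  rw [e3]; exact h2

/-- The crux endpoint inequality: for `ρ ≥ 2`, `p ≥ 2`: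
`2^(2-p) ρ^p ≤ (ρ-1)^p + pρ - 1`. -/
private lemma starstar {p ρ : ℝ} (hp : 2 ≤ p) (hρ : 2 ≤ ρ) :
    (2 : ℝ) ^ (2 - p) * ρ ^ p ≤ (ρ - 1) ^ p + p * ρ - 1 := by
  have hp1 : (1 : ℝ) ≤ p := by linarith
  set f : ℝ → ℝ := fun y => (y - 1) ^ p + p * y - 1 - 2 ^ (2 - p) * y ^ p with hf
  have hder : ∀ y : ℝ, HasDerivAt f
      (p * (y - 1) ^ (p - 1) + p - 2 ^ (2 - p) * (p * y ^ (p - 1))) y := by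
    intro y
    have h1 : HasDerivAt (fun y : ℝ => (y - 1) ^ p) (1 * p * (y - 1) ^ (p - 1)) y :=
      ((hasDerivAt_id y).sub_const 1).rpow_const (Or.inr hp1)
    have h2 : HasDerivAt (fun y : ℝ => p * y) (p * 1) y := (hasDerivAt_id y).const_mul p
    have h3 : HasDerivAt (fun y : ℝ => 2 ^ (2 - p) * y ^ p)
        (2 ^ (2 - p) * (p * y ^ (p - 1))) y :=
      (Real.hasDerivAt_rpow_const (Or.inr hp1)).const_mul _
    have := ((h1.add h2).sub_const 1).sub h3
    exact this.congr_deriv (by ring)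
  have hdiff : Differentiable ℝ f := fun y => (hder y).differentiableAt
  have hmono : MonotoneOn f (Ici 2) := by
    apply monotoneOn_of_deriv_nonneg (convex_Ici 2) hdiff.continuous.continuousOn
      hdiff.differentiableOn
    intro y hy
    rw [interior_Ici] at hy
    have hy2 : (2 : ℝ) < y := hy
    rw [(hder y).deriv]
    -- need : 2^(2-p) * (p * y^(p-1)) ≤ p * (y-1)^(p-1) + p
    have hkey : 2 ^ (2 - p) * y ^ (p - 1) ≤ (y - 1) ^ (p - 1) + 1 := by
      have hm := mid_rpow (by linarith : (0:ℝ) ≤ y - 1) (by norm_num : (0:ℝ) ≤ 1)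
        (by linarith : (1:ℝ) ≤ p - 1)
      rw [Real.one_rpow] at hm
      have e : (y - 1 + 1) / 2 = y / 2 := by ring
      rw [e] at hm
      have e2 : (2 : ℝ) ^ (2 - p) * y ^ (p - 1) = 2 * (y / 2) ^ (p - 1) := by
        have hy0 : (0:ℝ) ≤ y := by linarith
        have h2p1 : (0:ℝ) < (2:ℝ) ^ (p - 1) := Real.rpow_pos_of_pos two_pos _
        have hmul : (2:ℝ) ^ (2 - p) * (2:ℝ) ^ (p - 1) = 2 := by
          rw [← Real.rpow_add two_pos, show (2 - p) + (p - 1) = (1:ℝ) by ring,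
            Real.rpow_one]
        have hq2 : (2:ℝ) ^ (2 - p) = 2 / 2 ^ (p - 1) := by
          rw [eq_div_iff h2p1.ne']; exact hmul
        rw [Real.div_rpow hy0 (by norm_num : (0:ℝ) ≤ 2) (p - 1), hq2]
        ring
      rw [e2]
      exact hm
    have hp0 : 0 < p := by linarith
    nlinarith [hkey, hp0]
  have h2mem : (2 : ℝ) ∈ Ici (2:ℝ) := self_mem_Ici
  have hρmem : ρ ∈ Ici (2:ℝ) := hρ
  have := hmono h2mem hρmem hρ
  have hf2 : f 2 = 2 * p - 4 := by
    have e1 : ((2:ℝ) - 1) = 1 := by norm_num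
    have e2 : (2:ℝ) ^ (2 - p) * (2:ℝ) ^ p = 4 := by
      rw [← Real.rpow_add two_pos]
      norm_num
    simp only [hf, e1, Real.one_rpow]
    linarith [e2]
  rw [hf2] at this
  have : 0 ≤ f ρ := by linarith
  simp only [hf] at this
  linarith

/-- Key pointwise inequality:
`1 + p s + 2^(2-p) (t²+s²)^(p/2) ≤ (t²+s²+2s+1)^(p/2)` for `p ≥ 2`. -/
private lemma key_ineq (p : ℝ) (hp : 2 ≤ p) (s t : ℝ) :
    1 + p * s + 2 ^ (2 - p) * (t ^ 2 + s ^ 2) ^ (p / 2)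
      ≤ (t ^ 2 + s ^ 2 + 2 * s + 1) ^ (p / 2) := by
  have hq : (1:ℝ) ≤ p / 2 := by linarith
  have hu : (0:ℝ) ≤ t ^ 2 + s ^ 2 := by positivity
  have hA : (0:ℝ) ≤ t ^ 2 + s ^ 2 + 2 * s + 1 := by nlinarith [sq_nonneg (s + 1), sq_nonneg t]
  rcases le_total (t ^ 2 + s ^ 2) 4 with h4 | h4
  · -- small case: Bernoulli at 1
    have hb := one_add_mul_self_le_rpow_one_add
      (by linarith : (-1:ℝ) ≤ t ^ 2 + s ^ 2 + 2 * s) hq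
    have e : (1:ℝ) + (t ^ 2 + s ^ 2 + 2 * s) = t ^ 2 + s ^ 2 + 2 * s + 1 := by ring
    rw [e] at hb
    -- suffices : 2^(2-p) * u^(p/2) ≤ (p/2) * u
    have hsuff : 2 ^ (2 - p) * (t ^ 2 + s ^ 2) ^ (p / 2) ≤ p / 2 * (t ^ 2 + s ^ 2) := by
      rcases eq_or_lt_of_le hu with h0 | h0
      · rw [← h0, Real.zero_rpow (by linarith : p / 2 ≠ 0)]
        simp
      · have e1 : (t ^ 2 + s ^ 2) ^ (p / 2)
            = (t ^ 2 + s ^ 2) ^ (p / 2 - 1) * (t ^ 2 + s ^ 2) := by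
          rw [← Real.rpow_add_one h0.ne']
          norm_num
        rw [e1]
        have hle1 : 2 ^ (2 - p) * (t ^ 2 + s ^ 2) ^ (p / 2 - 1) ≤ 1 := by
          have e2 : 2 ^ (2 - p) * (t ^ 2 + s ^ 2) ^ (p / 2 - 1)
              = ((t ^ 2 + s ^ 2) / 4) ^ (p / 2 - 1) := by
            rw [Real.div_rpow hu (by norm_num : (0:ℝ) ≤ 4)]
            have h4e : (4:ℝ) ^ (p / 2 - 1) = 2 ^ (p - 2) := by
              rw [show (4:ℝ) = (2:ℝ) ^ ((2:ℕ):ℝ) by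
                  rw [Real.rpow_natCast]; norm_num,
                ← Real.rpow_mul (by norm_num : (0:ℝ) ≤ 2),
                show ((2:ℕ):ℝ) * (p / 2 - 1) = p - 2 by push_cast; ring]
            have hmul : (2:ℝ) ^ (2 - p) * (2:ℝ) ^ (p - 2) = 1 := by
              rw [← Real.rpow_add two_pos, show (2 - p) + (p - 2) = (0:ℝ) by ring,
                Real.rpow_zero]
            have h2p2 : (0:ℝ) < (2:ℝ) ^ (p - 2) := Real.rpow_pos_of_pos two_pos _
            have hq2 : (2:ℝ) ^ (2 - p) = 1 / 2 ^ (p - 2) := by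
              rw [eq_div_iff h2p2.ne']; exact hmul
            rw [h4e, hq2]
            ring
          rw [e2]
          exact Real.rpow_le_one (by positivity) (by linarith) (by linarith)
        calc 2 ^ (2 - p) * ((t ^ 2 + s ^ 2) ^ (p / 2 - 1) * (t ^ 2 + s ^ 2))
            = (2 ^ (2 - p) * (t ^ 2 + s ^ 2) ^ (p / 2 - 1)) * (t ^ 2 + s ^ 2) := by ring
          _ ≤ 1 * (t ^ 2 + s ^ 2) := by
              apply mul_le_mul_of_nonneg_right hle1 hu
          _ ≤ p / 2 * (t ^ 2 + s ^ 2) := by nlinarith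
    nlinarith [hb, hsuff]
  · -- large case : u ≥ 4
    set ρ := Real.sqrt (t ^ 2 + s ^ 2) with hρdef
    have hρ2 : (2:ℝ) ≤ ρ := by
      have h := Real.sqrt_le_sqrt h4
      rwa [show Real.sqrt 4 = 2 by
        rw [show (4:ℝ) = 2 ^ 2 by norm_num, Real.sqrt_sq (by norm_num : (0:ℝ) ≤ 2)]] at h
    have hρsq : ρ ^ 2 = t ^ 2 + s ^ 2 := Real.sq_sqrt hu
    have hsρ : -ρ ≤ s := by
      have h1 : Real.sqrt (s ^ 2) ≤ ρ := Real.sqrt_le_sqrt (by nlinarith [sq_nonneg t])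
      rw [Real.sqrt_sq_eq_abs] at h1
      have := neg_abs_le s
      linarith
    have ha1 : (1:ℝ) ≤ ρ - 1 := by linarith
    have ha : (1:ℝ) ≤ (ρ - 1) ^ 2 := by nlinarith
    have ha0 : (0:ℝ) < (ρ - 1) ^ 2 := by linarith
    have htan := tangent_rpow ha0 hA hq
    have hdiffe : t ^ 2 + s ^ 2 + 2 * s + 1 - (ρ - 1) ^ 2 = 2 * s + 2 * ρ := by
      nlinarith [hρsq]
    rw [hdiffe] at htan
    have hexp1 : ((ρ - 1) ^ 2) ^ (p / 2) = (ρ - 1) ^ p := by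
      rw [← Real.rpow_natCast (ρ - 1) 2, ← Real.rpow_mul (by linarith : (0:ℝ) ≤ ρ - 1),
        show ((2:ℕ):ℝ) * (p / 2) = p by push_cast; ring]
    rw [hexp1] at htan
    have hge1 : (1:ℝ) ≤ ((ρ - 1) ^ 2) ^ (p / 2 - 1) := by
      have := Real.rpow_le_rpow_of_exponent_le ha (by linarith : (0:ℝ) ≤ p / 2 - 1)
      rwa [Real.rpow_zero] at this
    have hstep : (ρ - 1) ^ p + p * s + p * ρ ≤ (t ^ 2 + s ^ 2 + 2 * s + 1) ^ (p / 2) := by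
      have h1 : p / 2 * 1 * (2 * s + 2 * ρ)
          ≤ p / 2 * ((ρ - 1) ^ 2) ^ (p / 2 - 1) * (2 * s + 2 * ρ) := by
        apply mul_le_mul_of_nonneg_right _ (by linarith : (0:ℝ) ≤ 2 * s + 2 * ρ)
        have hp0 : (0:ℝ) < p / 2 := by linarith
        nlinarith [hge1]
      nlinarith [htan, h1]
    have huexp : (t ^ 2 + s ^ 2) ^ (p / 2) = ρ ^ p := by
      rw [← hρsq, ← Real.rpow_natCast ρ 2, ← Real.rpow_mul (by linarith : (0:ℝ) ≤ ρ),
        show ((2:ℕ):ℝ) * (p / 2) = p by push_cast; ring]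
    rw [huexp]
    have := starstar hp hρ2
    linarith [hstep, this]

/-- The sharp constant `c₁(p)` in the lower bound for the `C_p` functional:
the infimum over `(s,t) ≠ (0,0)` of `[(t²+s²+2s+1)^{p/2} - 1 - ps] / (t²+s²)^{p/2}`. -/
noncomputable def c1 (p : ℝ) : ℝ :=
  sInf { r : ℝ | ∃ s t : ℝ, ¬(s = 0 ∧ t = 0) ∧
    r = ((t ^ 2 + s ^ 2 + 2 * s + 1) ^ (p / 2) - 1 - p * s) / (t ^ 2 + s ^ 2) ^ (p / 2) }

/-- Bounds on the sharp `C_p`-constant: for every `p ≥ 2`,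
`1/2^{p-2} ≤ c₁(p) ≤ (p-1)/2^{p-2}`. -/
theorem c1_bounds (p : ℝ) (hp : 2 ≤ p) :
    1 / (2 : ℝ) ^ (p - 2) ≤ c1 p ∧ c1 p ≤ (p - 1) / (2 : ℝ) ^ (p - 2) := by
  have h2p : (0:ℝ) < (2:ℝ) ^ (p - 2) := Real.rpow_pos_of_pos two_pos _
  have hinv : (2:ℝ) ^ (2 - p) = 1 / (2:ℝ) ^ (p - 2) := by
    rw [eq_div_iff h2p.ne', ← Real.rpow_add two_pos]
    norm_num
  set S := { r : ℝ | ∃ s t : ℝ, ¬(s = 0 ∧ t = 0) ∧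
    r = ((t ^ 2 + s ^ 2 + 2 * s + 1) ^ (p / 2) - 1 - p * s) / (t ^ 2 + s ^ 2) ^ (p / 2) }
    with hS
  have hc1 : c1 p = sInf S := rfl
  -- the element at s = -2, t = 0
  have hmem : (((0:ℝ) ^ 2 + (-2:ℝ) ^ 2 + 2 * (-2) + 1) ^ (p / 2) - 1 - p * (-2)) /
      ((0:ℝ) ^ 2 + (-2:ℝ) ^ 2) ^ (p / 2) ∈ S := by
    refine ⟨-2, 0, by norm_num, rfl⟩
  have hval : (((0:ℝ) ^ 2 + (-2:ℝ) ^ 2 + 2 * (-2) + 1) ^ (p / 2) - 1 - p * (-2)) /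
      ((0:ℝ) ^ 2 + (-2:ℝ) ^ 2) ^ (p / 2) = 2 * p / (2:ℝ) ^ p := by
    have e1 : ((0:ℝ) ^ 2 + (-2:ℝ) ^ 2 + 2 * (-2) + 1) = 1 := by norm_num
    have e2 : ((0:ℝ) ^ 2 + (-2:ℝ) ^ 2) = 4 := by norm_num
    rw [e1, e2, Real.one_rpow]
    have e3 : (4:ℝ) ^ (p / 2) = 2 ^ p := by
      rw [show (4:ℝ) = (2:ℝ) ^ ((2:ℕ):ℝ) by rw [Real.rpow_natCast]; norm_num,
        ← Real.rpow_mul (by norm_num : (0:ℝ) ≤ 2),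
        show ((2:ℕ):ℝ) * (p / 2) = p by push_cast; ring]
    rw [e3]
    ring_nf
  have hlow : ∀ r ∈ S, (2:ℝ) ^ (2 - p) ≤ r := by
    rintro r ⟨s, t, hst, rfl⟩
    have hu : (0:ℝ) < t ^ 2 + s ^ 2 := by
      rcases eq_or_ne s 0 with rfl | hs
      · have ht : t ≠ 0 := fun h => hst ⟨rfl, h⟩
        have : (0:ℝ) < t ^ 2 := lt_of_le_of_ne (sq_nonneg t) (Ne.symm (pow_ne_zero 2 ht))
        nlinarith [sq_nonneg (0:ℝ)]
      · have : (0:ℝ) < s ^ 2 := lt_of_le_of_ne (sq_nonneg s) (Ne.symm (pow_ne_zero 2 hs))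
        nlinarith [sq_nonneg t]
    have hden : (0:ℝ) < (t ^ 2 + s ^ 2) ^ (p / 2) := Real.rpow_pos_of_pos hu _
    rw [le_div_iff₀ hden]
    have := key_ineq p hp s t
    linarith
  have hbdd : BddBelow S := ⟨(2:ℝ) ^ (2 - p), fun r hr => hlow r hr⟩
  have hne : S.Nonempty := ⟨_, hmem⟩
  constructor
  · rw [hc1, ← hinv]
    exact le_csInf hne hlow
  · rw [hc1]
    have h1 : sInf S ≤ 2 * p / (2:ℝ) ^ p := by
      have := csInf_le hbdd hmem
      rwa [hval] at this
    have h2 : 2 * p / (2:ℝ) ^ p ≤ (p - 1) / (2:ℝ) ^ (p - 2) := by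
      have h2pp : (0:ℝ) < (2:ℝ) ^ p := Real.rpow_pos_of_pos two_pos _
      rw [div_le_div_iff₀ h2pp h2p]
      have e : (2:ℝ) ^ p = 4 * (2:ℝ) ^ (p - 2) := by
        have := Real.rpow_add two_pos 2 (p - 2)
        rw [show (2:ℝ) + (p - 2) = p by ring] at this
        rw [this]
        norm_num
      rw [e]
      nlinarith [h2p]
    linarith
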